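/- (Weak BV estimate, Lemma 1.) Let m : Fin N → ℝ. Suppose u : ℝ → Fin N → E is continuously differentiable in time, p : ℝ → Fin N → ℝ is continuous, and for every time t and every node i the semi-discrete scheme holds: m i • (du/dt)(t) i = RHS i (computed from u t and p t), and the discrete continuity constraint holds at every node. Then for every T > 0, ∫_0^T Σ_i Σ_{j ≠ i} ((dadd i j / 2)·‖u t j - u t i‖² + (dp i j / 2)·(p t j - p t i)²) dt = Σ_i m i·‖u 0 i‖²/2 - Σ_i m i·‖u T i‖²/2. -/

import Mathlib

open scoped RealInnerProductSpace BigOperators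

open Finset in
private lemma weakBV_swap_sum {N : ℕ} {M : Type*} [AddCommMonoid M] (f : Fin N → Fin N → M) :
    ∑ i, ∑ j ∈ univ.erase i, f i j = ∑ i, ∑ j ∈ univ.erase i, f j i := by
  rw [Finset.sum_comm' (t' := (univ : Finset (Fin N))) (s' := fun j => univ.erase j)
    (fun x y => by simp [eq_comm, and_comm])]

open Finset in
private lemma weakBV_half_sym {N : ℕ} (f : Fin N → Fin N → ℝ) :
    ∑ i, ∑ j ∈ univ.erase i, f i j
      = (1/2) * ∑ i, ∑ j ∈ univ.erase i, (f i j + f j i) := by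
  have h := weakBV_swap_sum f
  simp only [Finset.sum_add_distrib]
  rw [← h]; ring

open Finset in
private lemma weakBV_key {d N : ℕ}
    (c : Fin N → Fin N → EuclideanSpace ℝ (Fin d))
    (hc : ∀ i j, c j i = -c i j)
    (dadd dp : Fin N → Fin N → ℝ)
    (hdadd_symm : ∀ i j, dadd i j = dadd j i)
    (hdp_symm : ∀ i j, dp i j = dp j i)
    (v : Fin N → EuclideanSpace ℝ (Fin d)) (q : Fin N → ℝ)
    (hcont : ∀ i, ∑ j ∈ univ.erase i, (dp i j * (q j - q i) - ⟪v j + v i, c i j⟫) = 0) :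
    ∑ i, ⟪(∑ j ∈ univ.erase i,
        ((dadd i j - ⟪((1 : ℝ) / 2) • (v j + v i), c i j⟫) • (v j - v i)
          - (q j - q i) • c i j))
      - (∑ j ∈ univ.erase i, ⟪((1 : ℝ) / 2) • (v j + v i), c i j⟫) • v i, v i⟫
    = -(∑ i, ∑ j ∈ univ.erase i,
        ((dadd i j / 2) * ‖v j - v i‖ ^ 2 + (dp i j / 2) * (q j - q i) ^ 2)) := by
  -- step 1: rewrite LHS as a double sum
  have step1 : ∑ i, ⟪(∑ j ∈ univ.erase i,
        ((dadd i j - ⟪((1 : ℝ) / 2) • (v j + v i), c i j⟫) • (v j - v i)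
          - (q j - q i) • c i j))
      - (∑ j ∈ univ.erase i, ⟪((1 : ℝ) / 2) • (v j + v i), c i j⟫) • v i, v i⟫
    = ∑ i, ∑ j ∈ univ.erase i,
        ((dadd i j - ⟪((1 : ℝ) / 2) • (v j + v i), c i j⟫) * ⟪v j - v i, v i⟫
          - (q j - q i) * ⟪c i j, v i⟫
          - ⟪((1 : ℝ) / 2) • (v j + v i), c i j⟫ * ⟪v i, v i⟫) := by
    refine Finset.sum_congr rfl fun i _ => ?_
    rw [inner_sub_left, sum_inner, real_inner_smul_left, Finset.sum_mul,
      ← Finset.sum_sub_distrib]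
    refine Finset.sum_congr rfl fun j _ => ?_
    simp only [inner_sub_left, real_inner_smul_left]
  rw [step1]
  -- step 2: symmetrize
  rw [weakBV_half_sym]
  have step2 : ∀ i j : Fin N,
      (((dadd i j - ⟪((1 : ℝ) / 2) • (v j + v i), c i j⟫) * ⟪v j - v i, v i⟫
          - (q j - q i) * ⟪c i j, v i⟫
          - ⟪((1 : ℝ) / 2) • (v j + v i), c i j⟫ * ⟪v i, v i⟫)
        + ((dadd j i - ⟪((1 : ℝ) / 2) • (v i + v j), c j i⟫) * ⟪v i - v j, v j⟫
          - (q i - q j) * ⟪c j i, v j⟫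
          - ⟪((1 : ℝ) / 2) • (v i + v j), c j i⟫ * ⟪v j, v j⟫))
      = -(dadd i j * ‖v j - v i‖ ^ 2) - (q j - q i) * ⟪v j + v i, c i j⟫ := by
    intro i j
    rw [hdadd_symm j i, hc i j, norm_sub_sq_real]
    simp only [inner_neg_left, inner_neg_right, real_inner_smul_left, inner_sub_left,
      inner_sub_right, inner_add_left, inner_add_right, real_inner_self_eq_norm_sq]
    rw [real_inner_comm (v j) (v i), real_inner_comm (c i j) (v i),
      real_inner_comm (c i j) (v j)]
    ring
  simp only [step2]
  -- step 3: pressure sum identity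
  have hf : ∀ i j : Fin N, ⟪v i + v j, c j i⟫ = -⟪v j + v i, c i j⟫ := by
    intro i j; rw [hc i j, add_comm (v i)]; simp [inner_neg_right]
  have h2 : ∀ i, ∑ j ∈ univ.erase i, (⟪v j + v i, c i j⟫ : ℝ)
      = ∑ j ∈ univ.erase i, dp i j * (q j - q i) := by
    intro i
    have := hcont i
    rw [Finset.sum_sub_distrib, sub_eq_zero] at this
    exact this.symm
  have h3 : ∑ i, ∑ j ∈ univ.erase i, q i * (dp i j * (q j - q i))
      = -(1/2) * ∑ i, ∑ j ∈ univ.erase i, dp i j * (q j - q i)^2 := by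
    rw [weakBV_half_sym]
    have : ∀ i j : Fin N, q i * (dp i j * (q j - q i)) + q j * (dp j i * (q i - q j))
        = -(dp i j * (q j - q i)^2) := by
      intro i j; rw [hdp_symm j i]; ring
    simp only [this, Finset.sum_neg_distrib]
    ring
  have hP : ∑ i, ∑ j ∈ univ.erase i, (q j - q i) * ⟪v j + v i, c i j⟫
      = ∑ i, ∑ j ∈ univ.erase i, dp i j * (q j - q i)^2 := by
    have hswap : ∑ i, ∑ j ∈ univ.erase i, q j * ⟪v j + v i, c i j⟫
        = -∑ i, ∑ j ∈ univ.erase i, q i * ⟪v j + v i, c i j⟫ := by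
      rw [weakBV_swap_sum (fun i j => q j * ⟪v j + v i, c i j⟫)]
      rw [show (∑ i, ∑ j ∈ univ.erase i, q i * ⟪v i + v j, c j i⟫ : ℝ)
          = ∑ i, ∑ j ∈ univ.erase i, -(q i * ⟪v j + v i, c i j⟫) from
        Finset.sum_congr rfl fun i _ => Finset.sum_congr rfl fun j _ => by rw [hf i j]; ring]
      simp only [Finset.sum_neg_distrib]
    have hqf : ∑ i, ∑ j ∈ univ.erase i, q i * ⟪v j + v i, c i j⟫
        = -(1/2) * ∑ i, ∑ j ∈ univ.erase i, dp i j * (q j - q i)^2 := by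
      rw [← h3]
      refine Finset.sum_congr rfl fun i _ => ?_
      rw [← Finset.mul_sum, ← Finset.mul_sum, h2 i]
    calc ∑ i, ∑ j ∈ univ.erase i, (q j - q i) * ⟪v j + v i, c i j⟫
        = ∑ i, ∑ j ∈ univ.erase i, (q j * ⟪v j + v i, c i j⟫ - q i * ⟪v j + v i, c i j⟫) := by
          refine Finset.sum_congr rfl fun i _ => Finset.sum_congr rfl fun j _ => by ring
      _ = (∑ i, ∑ j ∈ univ.erase i, q j * ⟪v j + v i, c i j⟫)
          - ∑ i, ∑ j ∈ univ.erase i, q i * ⟪v j + v i, c i j⟫ := by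
          simp [Finset.sum_sub_distrib]
      _ = ∑ i, ∑ j ∈ univ.erase i, dp i j * (q j - q i)^2 := by
          rw [hswap, hqf]; ring
  -- finish
  rw [show (∑ i, ∑ j ∈ univ.erase i,
      (-(dadd i j * ‖v j - v i‖ ^ 2) - (q j - q i) * ⟪v j + v i, c i j⟫) : ℝ)
    = (∑ i, ∑ j ∈ univ.erase i, -(dadd i j * ‖v j - v i‖ ^ 2))
      - ∑ i, ∑ j ∈ univ.erase i, (q j - q i) * ⟪v j + v i, c i j⟫ by
      simp [Finset.sum_sub_distrib]]
  rw [hP]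
  simp only [mul_sub, Finset.mul_sum, ← Finset.sum_sub_distrib]
  rw [show -(∑ i, ∑ j ∈ univ.erase i,
      ((dadd i j / 2) * ‖v j - v i‖ ^ 2 + (dp i j / 2) * (q j - q i) ^ 2) : ℝ)
    = ∑ i, ∑ j ∈ univ.erase i,
      -((dadd i j / 2) * ‖v j - v i‖ ^ 2 + (dp i j / 2) * (q j - q i) ^ 2) by
    simp only [Finset.sum_neg_distrib]]
  refine Finset.sum_congr rfl fun i _ => Finset.sum_congr rfl fun j _ => by ring

/-- Weak BV estimate (Lemma 1): along solutions of the semi-discrete scheme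
satisfying the discrete continuity constraint, the time integral of the total
dissipation equals the total kinetic energy lost between times `0` and `T`. -/
theorem weak_BV_estimate
    (d N : ℕ) (hd : 1 ≤ d) (hN : 1 ≤ N)
    (m : Fin N → ℝ)
    (c : Fin N → Fin N → EuclideanSpace ℝ (Fin d))
    (hc : ∀ i j, c j i = -c i j)
    (dadd dp : Fin N → Fin N → ℝ)
    (hdadd_symm : ∀ i j, dadd i j = dadd j i)
    (hdp_symm : ∀ i j, dp i j = dp j i)
    (u : ℝ → Fin N → EuclideanSpace ℝ (Fin d))
    (u' : ℝ → Fin N → EuclideanSpace ℝ (Fin d))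
    (p : ℝ → Fin N → ℝ)
    (hu' : ∀ i t, HasDerivAt (fun s => u s i) (u' t i) t)
    (hu'cont : ∀ i, Continuous fun t => u' t i)
    (hpcont : ∀ i, Continuous fun t => p t i)
    (hscheme : ∀ t i, m i • u' t i =
      (∑ j ∈ Finset.univ.erase i,
        ((dadd i j - ⟪((1 : ℝ) / 2) • (u t j + u t i), c i j⟫) • (u t j - u t i)
          - (p t j - p t i) • c i j))
      - (∑ j ∈ Finset.univ.erase i,
          ⟪((1 : ℝ) / 2) • (u t j + u t i), c i j⟫) • u t i)
    (hcont : ∀ t i, ∑ j ∈ Finset.univ.erase i,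
      (dp i j * (p t j - p t i) - ⟪u t j + u t i, c i j⟫) = 0) :
    ∀ T : ℝ, 0 < T →
      (∫ t in (0 : ℝ)..T, ∑ i, ∑ j ∈ Finset.univ.erase i,
        ((dadd i j / 2) * ‖u t j - u t i‖ ^ 2 + (dp i j / 2) * (p t j - p t i) ^ 2))
      = (∑ i, m i * ‖u 0 i‖ ^ 2 / 2) - ∑ i, m i * ‖u T i‖ ^ 2 / 2 := by
  intro T hT
  set D : ℝ → ℝ := fun t => ∑ i, ∑ j ∈ Finset.univ.erase i,
      ((dadd i j / 2) * ‖u t j - u t i‖ ^ 2 + (dp i j / 2) * (p t j - p t i) ^ 2) with hD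
  -- the energy derivative
  have hE : ∀ t : ℝ, HasDerivAt (fun s => ∑ i, m i * ‖u s i‖ ^ 2 / 2) (-(D t)) t := by
    intro t
    have h : ∀ i : Fin N, HasDerivAt (fun s => m i * ‖u s i‖ ^ 2 / 2)
        (m i * ⟪u' t i, u t i⟫) t := by
      intro i
      have h1 := (hu' i t).inner ℝ (hu' i t)
      have h2 : (fun s => (⟪u s i, u s i⟫ : ℝ)) = fun s => ‖u s i‖ ^ 2 :=
        funext fun s => real_inner_self_eq_norm_sq _
      rw [h2] at h1
      have h3 := (h1.const_mul (m i)).div_const 2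
      exact h3.congr_deriv (by rw [real_inner_comm (u t i) (u' t i)]; ring)
    have hsum := HasDerivAt.fun_sum (fun i (_ : i ∈ Finset.univ) => h i)
    have hkey : ∑ i, m i * ⟪u' t i, u t i⟫ = -(D t) := by
      have : ∀ i : Fin N, m i * ⟪u' t i, u t i⟫ = ⟪m i • u' t i, u t i⟫ := by
        intro i; rw [real_inner_smul_left]
      simp only [this, hscheme t]
      exact weakBV_key c hc dadd dp hdadd_symm hdp_symm (u t) (p t) (hcont t)
    rwa [hkey] at hsum
  -- continuity of D
  have hucont : ∀ i, Continuous fun t => u t i := fun i =>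
    continuous_iff_continuousAt.2 fun t => (hu' i t).continuousAt
  have hDcont : Continuous D := by
    apply continuous_finset_sum
    intro i _
    apply continuous_finset_sum
    intro j _
    exact (continuous_const.mul
        ((((hucont j).sub (hucont i)).norm).pow 2)).add
      (continuous_const.mul (((hpcont j).sub (hpcont i)).pow 2))
  have hint : IntervalIntegrable (fun t => -(D t)) MeasureTheory.volume 0 T :=
    (hDcont.neg).intervalIntegrable 0 T
  have hFTC := intervalIntegral.integral_eq_sub_of_hasDerivAt
    (f := fun s => ∑ i, m i * ‖u s i‖ ^ 2 / 2) (f' := fun t => -(D t))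
    (fun t _ => hE t) hint
  rw [intervalIntegral.integral_neg] at hFTC
  have : (∫ t in (0:ℝ)..T, D t)
      = (∑ i, m i * ‖u 0 i‖ ^ 2 / 2) - ∑ i, m i * ‖u T i‖ ^ 2 / 2 := by
    linarith [hFTC]
  exact this
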